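/- Let c_β′ denote the derivative of c_β. (a) For 0 < β ≤ β_c = log 4, the function w ↦ c_β′(w) is strictly concave on (0, ∞). (b) For β > β_c, setting w_c(β) = cosh⁻¹((1/2)e^β − 4e^{−β}) ≥ 0, the function w ↦ c_β′(w) is strictly convex on (0, w_c(β)) and strictly concave on (w_c(β), ∞). -/

import Mathlib

noncomputable section

open Real

/-- Cumulant generating function
`c_β(t) = log[(1 + e^{−β}(e^t + e^{−t}))/(1 + 2e^{−β})]`. -/
def cBC (β t : ℝ) : ℝ :=
  Real.log ((1 + Real.exp (-β) * (Real.exp t + Real.exp (-t))) / (1 + 2 * Real.exp (-β)))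

private lemma expNegDeriv (t : ℝ) :
    HasDerivAt (fun x : ℝ => Real.exp (-x)) (-Real.exp (-t)) t := by
  simpa [Function.comp_def] using (Real.hasDerivAt_exp (-t)).comp t (hasDerivAt_neg t)

private lemma hasDerivAt_N (a t : ℝ) :
    HasDerivAt (fun x => 1 + a * (Real.exp x + Real.exp (-x)))
      (a * (Real.exp t - Real.exp (-t))) t := by
  have h := (((Real.hasDerivAt_exp t).add (expNegDeriv t)).const_mul a).const_add 1
  simpa [mul_sub, sub_eq_add_neg] using h

private lemma hasDerivAt_S (a t : ℝ) :
    HasDerivAt (fun x => a * (Real.exp x - Real.exp (-x)))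
      (a * (Real.exp t + Real.exp (-t))) t := by
  have h := ((Real.hasDerivAt_exp t).sub (expNegDeriv t)).const_mul a
  simpa [mul_add, sub_neg_eq_add] using h

private lemma N_pos (a t : ℝ) (ha : 0 < a) :
    0 < 1 + a * (Real.exp t + Real.exp (-t)) := by positivity

private lemma cBC_eq (β : ℝ) : cBC β = fun t =>
    Real.log (1 + Real.exp (-β) * (Real.exp t + Real.exp (-t))) -
      Real.log (1 + 2 * Real.exp (-β)) := by
  funext t
  unfold cBC
  rw [Real.log_div (by positivity) (by positivity)]

private lemma deriv_cBC (β : ℝ) : deriv (cBC β) = fun t =>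
    Real.exp (-β) * (Real.exp t - Real.exp (-t)) /
      (1 + Real.exp (-β) * (Real.exp t + Real.exp (-t))) := by
  funext t
  rw [cBC_eq]
  exact (((hasDerivAt_N (Real.exp (-β)) t).log (N_pos _ t (exp_pos _)).ne').sub_const _).deriv

private lemma hasDerivAt_C (a t : ℝ) :
    HasDerivAt (fun x => a * (Real.exp x + Real.exp (-x)))
      (a * (Real.exp t - Real.exp (-t))) t := by
  have h := ((Real.hasDerivAt_exp t).add (expNegDeriv t)).const_mul a
  simpa [mul_sub, sub_eq_add_neg] using h

private lemma deriv3_cBC (β t : ℝ) :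
    deriv (deriv (deriv (cBC β))) t =
      Real.exp (-β) * (Real.exp t - Real.exp (-t)) *
        (2 - (1 + Real.exp (-β) * (Real.exp t + Real.exp (-t))) - 8 * Real.exp (-β) ^ 2) /
        (1 + Real.exp (-β) * (Real.exp t + Real.exp (-t))) ^ 3 := by
  set a := Real.exp (-β) with ha
  have hapos : 0 < a := Real.exp_pos _
  rw [deriv_cBC]
  have hd1 : ∀ x : ℝ, HasDerivAt
      (fun t => a * (Real.exp t - Real.exp (-t)) / (1 + a * (Real.exp t + Real.exp (-t))))
      ((a * (Real.exp x + Real.exp (-x)) * (1 + a * (Real.exp x + Real.exp (-x))) -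
        a * (Real.exp x - Real.exp (-x)) * (a * (Real.exp x - Real.exp (-x)))) /
        (1 + a * (Real.exp x + Real.exp (-x))) ^ 2) x := fun x =>
    (hasDerivAt_S a x).div (hasDerivAt_N a x) (N_pos a x hapos).ne'
  have hrw : deriv (fun t => a * (Real.exp t - Real.exp (-t)) /
      (1 + a * (Real.exp t + Real.exp (-t)))) = fun x =>
      (a * (Real.exp x + Real.exp (-x)) * (1 + a * (Real.exp x + Real.exp (-x))) -
        a * (Real.exp x - Real.exp (-x)) * (a * (Real.exp x - Real.exp (-x)))) /
        (1 + a * (Real.exp x + Real.exp (-x))) ^ 2 := funext fun x => (hd1 x).deriv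
  rw [hrw]
  have hP : HasDerivAt (fun x =>
      a * (Real.exp x + Real.exp (-x)) * (1 + a * (Real.exp x + Real.exp (-x))) -
        a * (Real.exp x - Real.exp (-x)) * (a * (Real.exp x - Real.exp (-x))))
      ((a * (Real.exp t - Real.exp (-t)) * (1 + a * (Real.exp t + Real.exp (-t))) +
        a * (Real.exp t + Real.exp (-t)) * (a * (Real.exp t - Real.exp (-t)))) -
       (a * (Real.exp t + Real.exp (-t)) * (a * (Real.exp t - Real.exp (-t))) +
        a * (Real.exp t - Real.exp (-t)) * (a * (Real.exp t + Real.exp (-t))))) t :=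
    ((hasDerivAt_C a t).mul (hasDerivAt_N a t)).sub
      ((hasDerivAt_S a t).mul (hasDerivAt_S a t))
  have hQ : HasDerivAt (fun x => (1 + a * (Real.exp x + Real.exp (-x))) ^ 2)
      ((2 : ℕ) * (1 + a * (Real.exp t + Real.exp (-t))) ^ (2 - 1) *
        (a * (Real.exp t - Real.exp (-t)))) t := (hasDerivAt_N a t).pow 2
  have htot := hP.div hQ (pow_ne_zero 2 (N_pos a t hapos).ne')
  erw [htot.deriv]
  have hNne : (1 + a * (Real.exp t + Real.exp (-t))) ≠ 0 := (N_pos a t hapos).ne'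
  have hexp : Real.exp (-t) = (Real.exp t)⁻¹ := Real.exp_neg t
  have hene : Real.exp t ≠ 0 := (Real.exp_pos t).ne'
  rw [hexp] at hNne ⊢
  field_simp
  ring_nf
  field_simp
  ring

private lemma continuous_deriv_cBC (β : ℝ) : Continuous (deriv (cBC β)) := by
  rw [deriv_cBC]
  exact Continuous.div (by fun_prop) (by fun_prop)
    (fun x => (N_pos _ x (Real.exp_pos _)).ne')

private lemma iter2 (f : ℝ → ℝ) (x : ℝ) : deriv^[2] f x = deriv (deriv f) x := rfl

private lemma exp_prod (x : ℝ) : Real.exp x * Real.exp (-x) = 1 := by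
  rw [← Real.exp_add]; simp

/-- **Concavity behavior of `c_β′`** (Theorem 3.5 of Ellis–Otto–Touchette).
(a) For `0 < β ≤ β_c = log 4`, `c_β′` is strictly concave on `(0,∞)`.
(b) For `β > β_c`, with `w_c(β) = cosh⁻¹((1/2)e^β − 4e^{−β}) ≥ 0`, `c_β′` is
strictly convex on `(0, w_c(β))` and strictly concave on `(w_c(β), ∞)`. -/
theorem blume_capel_cprime_concavity (β : ℝ) (hβ0 : 0 < β) :
    (β ≤ Real.log 4 → StrictConcaveOn ℝ (Set.Ioi (0 : ℝ)) (deriv (cBC β))) ∧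
    (Real.log 4 < β → ∃ wc : ℝ, 0 ≤ wc ∧
      Real.cosh wc = (1 / 2) * Real.exp β - 4 * Real.exp (-β) ∧
      StrictConvexOn ℝ (Set.Ioo (0 : ℝ) wc) (deriv (cBC β)) ∧
      StrictConcaveOn ℝ (Set.Ioi wc) (deriv (cBC β))) := by
  have hapos : 0 < Real.exp (-β) := Real.exp_pos _
  set a := Real.exp (-β) with ha
  have hEβ : Real.exp β = a⁻¹ := by rw [ha, Real.exp_neg, inv_inv]
  constructor
  · -- part (a)
    intro hβle
    have hlog4 : Real.exp (-Real.log 4) = 1/4 := by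
      rw [Real.exp_neg, Real.exp_log (by norm_num : (0:ℝ) < 4)]; norm_num
    have ha4 : (1:ℝ)/4 ≤ a := by
      have h1 : Real.exp (-Real.log 4) ≤ Real.exp (-β) := Real.exp_le_exp.mpr (by linarith)
      rwa [hlog4, ← ha] at h1
    apply strictConcaveOn_of_deriv2_neg (convex_Ioi 0)
      (continuous_deriv_cBC β).continuousOn
    intro x hx
    rw [interior_Ioi] at hx
    have hx0 : (0:ℝ) < x := hx
    rw [iter2, deriv3_cBC, ← ha]
    have he1 : 1 < Real.exp x := by
      have := Real.exp_lt_exp.mpr hx0; rwa [Real.exp_zero] at this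
    have he2 : 0 < Real.exp (-x) := Real.exp_pos _
    have hprod := exp_prod x
    have hNpos := N_pos a x hapos
    apply div_neg_of_neg_of_pos
    · apply mul_neg_of_pos_of_neg
      · apply mul_pos hapos
        nlinarith
      · have hd : 0 < Real.exp x - 1 := by linarith
        have hsum : 2 < Real.exp x + Real.exp (-x) := by
          nlinarith [mul_pos he2 (mul_pos hd hd)]
        nlinarith [mul_lt_mul_of_pos_left hsum hapos]
    · positivity
  · -- part (b)
    intro hβgt
    have hlog4 : Real.exp (-Real.log 4) = 1/4 := by
      rw [Real.exp_neg, Real.exp_log (by norm_num : (0:ℝ) < 4)]; norm_num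
    have ha4 : a < 1/4 := by
      have h1 : Real.exp (-β) < Real.exp (-Real.log 4) := Real.exp_lt_exp.mpr (by linarith)
      rwa [hlog4, ← ha] at h1
    set v : ℝ := (1/2) * Real.exp β - 4 * a with hv
    have hva : 2 * a * v = 1 - 8 * a ^ 2 := by
      rw [hv, hEβ]; field_simp; ring
    have hv1 : 1 < v := by nlinarith
    -- find wc by IVT
    obtain ⟨wc, hwcmem, hwccosh⟩ : ∃ wc ∈ Set.Icc (0:ℝ) (Real.log (2*v)),
        Real.cosh wc = v := by
      have hX0 : (0:ℝ) ≤ Real.log (2*v) := Real.log_nonneg (by linarith)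
      have hsub := intermediate_value_Icc hX0 Real.continuous_cosh.continuousOn
      have hmem : v ∈ Set.Icc (Real.cosh 0) (Real.cosh (Real.log (2*v))) := by
        constructor
        · rw [Real.cosh_zero]; linarith
        · rw [Real.cosh_eq, Real.exp_log (by linarith : (0:ℝ) < 2*v)]
          have := Real.exp_pos (-(Real.log (2*v)))
          linarith
      obtain ⟨wc, hmem', heq⟩ := hsub hmem
      exact ⟨wc, hmem', heq⟩
    have hwc0 : 0 ≤ wc := hwcmem.1
    refine ⟨wc, hwc0, hwccosh, ?_, ?_⟩
    · -- strictly convex on (0, wc)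
      apply strictConvexOn_of_deriv2_pos (convex_Ioo 0 wc)
        (continuous_deriv_cBC β).continuousOn
      intro x hx
      rw [interior_Ioo] at hx
      obtain ⟨hx0, hxwc⟩ := hx
      rw [iter2, deriv3_cBC, ← ha]
      have he1 : 1 < Real.exp x := by
        have := Real.exp_lt_exp.mpr hx0; rwa [Real.exp_zero] at this
      have he2 : 0 < Real.exp (-x) := Real.exp_pos _
      have hprod := exp_prod x
      have hcoshlt : Real.cosh x < v := by
        rw [← hwccosh]
        exact Real.cosh_lt_cosh.mpr (by rw [abs_of_pos hx0, abs_of_nonneg hwc0]; exact hxwc)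
      have hcx : Real.exp x + Real.exp (-x) = 2 * Real.cosh x := by
        rw [Real.cosh_eq]; ring
      apply div_pos
      · apply mul_pos
        · apply mul_pos hapos; nlinarith
        · rw [hcx]; nlinarith
      · positivity
    · -- strictly concave on (wc, ∞)
      apply strictConcaveOn_of_deriv2_neg (convex_Ioi wc)
        (continuous_deriv_cBC β).continuousOn
      intro x hx
      rw [interior_Ioi] at hx
      have hx0 : (0:ℝ) < x := lt_of_le_of_lt hwc0 hx
      rw [iter2, deriv3_cBC, ← ha]
      have he1 : 1 < Real.exp x := by
        have := Real.exp_lt_exp.mpr hx0; rwa [Real.exp_zero] at this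
      have he2 : 0 < Real.exp (-x) := Real.exp_pos _
      have hprod := exp_prod x
      have hcoshgt : v < Real.cosh x := by
        rw [← hwccosh]
        exact Real.cosh_lt_cosh.mpr (by rw [abs_of_nonneg hwc0, abs_of_pos hx0]; exact hx)
      have hcx : Real.exp x + Real.exp (-x) = 2 * Real.cosh x := by
        rw [Real.cosh_eq]; ring
      apply div_neg_of_neg_of_pos
      · apply mul_neg_of_pos_of_neg
        · apply mul_pos hapos; nlinarith
        · rw [hcx]; nlinarith
      · positivity

end
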